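/- Let Ω = B_1(0) ⊆ ℝⁿ, n ≥ 1, s > 1, and define D₂(x₁,…,xₙ) = |x₁|^s I. Then for every β ∈ (max(1/2, 1/s), 1) there exists C ≥ 0 such that for all continuous vector fields Φ : closure(Ω) → ℝⁿ, ∫_Ω |∇·D₂ · Φ| ≤ C ( ∫_Ω (Φ · D₂ Φ)^β + 1 ), where ∇·D₂(x) = (s|x₁|^{s-2}x₁, 0, …, 0) almost everywhere. -/

import Mathlib

open MeasureTheory Real Set

lemma oneD {γ : ℝ} (hγ : -1 < γ) :
    IntegrableOn (fun t : ℝ => |t| ^ γ) (Icc (-1) 1) := by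
  have h1 : IntegrableOn (fun t : ℝ => t ^ γ) (Ioc 0 (1:ℝ)) := by
    have := intervalIntegral.intervalIntegrable_rpow' (a := 0) (b := 1) hγ
    rwa [intervalIntegrable_iff_integrableOn_Ioc_of_le (by norm_num)] at this
  have h2 : IntegrableOn (fun t : ℝ => |t| ^ γ) (Ioc 0 (1:ℝ)) := by
    refine h1.congr_fun (fun t ht => ?_) measurableSet_Ioc
    rw [abs_of_pos ht.1]
  have h3 : IntegrableOn (fun t : ℝ => |t| ^ γ) (Ico (-1) (0:ℝ)) := by
    rw [← (Measure.measurePreserving_neg (volume : Measure ℝ)).integrableOn_comp_preimage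
        (Homeomorph.neg ℝ).measurableEmbedding]
    simp only [Function.comp_def, abs_neg, neg_preimage, neg_Ico, neg_neg, neg_zero]
    exact h2
  have hsub : Icc (-1:ℝ) 1 ⊆ Ico (-1) 0 ∪ Ioc 0 1 ∪ {0} := by
    intro t ht
    rcases lt_trichotomy t 0 with h|h|h
    · exact Or.inl (Or.inl ⟨ht.1, h⟩)
    · exact Or.inr (by simp [h])
    · exact Or.inl (Or.inr ⟨h, ht.2⟩)
  refine IntegrableOn.mono_set ?_ hsub
  exact (h3.union h2).union (by simp [IntegrableOn])

lemma cubeInt {n : ℕ} (hn : 1 ≤ n) {γ : ℝ} (hγ : -1 < γ) :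
    Integrable ((univ.pi (fun _ : Fin n => Icc (-1:ℝ) 1)).indicator
      (fun x : Fin n → ℝ => |x ⟨0, hn⟩| ^ γ)) := by
  set i0 : Fin n := ⟨0, hn⟩
  have heq : ((univ.pi fun _ : Fin n => Icc (-1:ℝ) 1).indicator fun x => |x i0| ^ γ)
      = fun x : Fin n → ℝ =>
        ∏ i, ((Icc (-1:ℝ) 1).indicator (fun t => if i = i0 then |t| ^ γ else 1)) (x i) := by
    funext x
    by_cases hx : x ∈ univ.pi fun _ : Fin n => Icc (-1:ℝ) 1
    · rw [indicator_of_mem hx]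
      have : ∀ i : Fin n, ((Icc (-1:ℝ) 1).indicator
          (fun t => if i = i0 then |t| ^ γ else 1)) (x i)
          = if i = i0 then |x i| ^ γ else 1 := fun i =>
        indicator_of_mem (hx i (mem_univ i)) _
      simp only [this]
      simp
    · rw [indicator_of_notMem hx]
      obtain ⟨i, hi⟩ : ∃ i, x i ∉ Icc (-1:ℝ) 1 := by
        by_contra h
        push_neg at h
        exact hx fun i _ => h i
      exact (Finset.prod_eq_zero (Finset.mem_univ i)
        (by rw [indicator_of_notMem hi])).symm
  rw [heq]
  refine Integrable.fintype_prod (f := fun i =>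
    ((Icc (-1:ℝ) 1).indicator (fun t => if i = i0 then |t| ^ γ else 1))) (fun i => ?_)
  rw [integrable_indicator_iff measurableSet_Icc]
  by_cases h : i = i0
  · simpa [h] using oneD hγ
  · simp only [h, if_false]
    exact integrableOn_const (by simp)

lemma coordBound {n : ℕ} (x : EuclideanSpace ℝ (Fin n)) (i : Fin n) : |x i| ≤ ‖x‖ := by
  rw [EuclideanSpace.norm_eq, ← Real.sqrt_sq_eq_abs]
  have h := Finset.single_le_sum (f := fun j => ‖x j‖ ^ 2)
    (fun j _ => sq_nonneg _) (Finset.mem_univ i)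
  simpa [Real.norm_eq_abs, sq_abs] using Real.sqrt_le_sqrt h

lemma euclInt {n : ℕ} (hn : 1 ≤ n) {γ : ℝ} (hγ : -1 < γ) :
    IntegrableOn (fun x : EuclideanSpace ℝ (Fin n) => |x ⟨0, hn⟩| ^ γ)
      (Metric.ball 0 1) := by
  have hsub : Metric.ball (0 : EuclideanSpace ℝ (Fin n)) 1
      ⊆ {x | ∀ i, x i ∈ Icc (-1:ℝ) 1} := by
    intro x hx i
    rw [Metric.mem_ball, dist_zero_right] at hx
    exact abs_le.1 ((coordBound x i).trans hx.le)
  refine IntegrableOn.mono_set ?_ hsub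
  have hmeas : MeasurableSet {x : EuclideanSpace ℝ (Fin n) | ∀ i, x i ∈ Icc (-1:ℝ) 1} := by
    have : {x : EuclideanSpace ℝ (Fin n) | ∀ i, x i ∈ Icc (-1:ℝ) 1}
        = ⋂ i, (fun x : EuclideanSpace ℝ (Fin n) => x i) ⁻¹' (Icc (-1:ℝ) 1) := by
      ext x; simp
    rw [this]
    exact MeasurableSet.iInter fun i =>
      ((EuclideanSpace.proj i : EuclideanSpace ℝ (Fin n) →L[ℝ] ℝ).continuous.measurable)
        measurableSet_Icc
  refine (integrable_indicator_iff hmeas).mp ?_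
  have mp := (EuclideanSpace.volume_preserving_symm_measurableEquiv_toLp (Fin n)).symm
  rw [← mp.integrable_comp_emb (MeasurableEquiv.measurableEmbedding _)]
  have hc := cubeInt hn hγ
  refine hc.congr (Filter.Eventually.of_forall fun x => ?_)
  simp only [Function.comp_apply]
  have key : ∀ i : Fin n, ((MeasurableEquiv.toLp 2 (Fin n → ℝ)).symm.symm x) i = x i :=
    fun i => rfl
  by_cases hx : ∀ i : Fin n, x i ∈ Icc (-1:ℝ) 1
  · rw [indicator_of_mem (Set.mem_univ_pi.mpr hx),
      indicator_of_mem (by simpa [key] using hx)]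
    rw [key]
  · rw [indicator_of_notMem (fun h => hx (fun i => Set.mem_univ_pi.mp h i)),
      indicator_of_notMem (by simpa [key] using hx)]

lemma ptwise {s β : ℝ} (hs : 1 < s) (hβ1 : 1/2 < β) (hβ2 : β < 1)
    {t u : ℝ} (ht0 : 0 ≤ t) (hu : 0 ≤ u) :
    t ^ (s-1) * u ≤ (t ^ s * u ^ 2) ^ β + t ^ ((s-2)*β/(2*β-1)) := by
  have hβ0 : 0 < β := lt_trans (by norm_num) hβ1
  have h2β : 0 < 2*β - 1 := by linarith
  rcases eq_or_lt_of_le ht0 with h0 | h0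
  · rw [← h0, zero_rpow (by intro h; linarith : s - 1 ≠ 0)]
    have h1 : (0:ℝ) ≤ ((0:ℝ) ^ s * u ^ 2) ^ β := rpow_nonneg
      (mul_nonneg (rpow_nonneg le_rfl s) (sq_nonneg u)) β
    have h2 : (0:ℝ) ≤ (0:ℝ) ^ ((s-2)*β/(2*β-1)) := rpow_nonneg le_rfl _
    linarith
  · have hpq : (2*β).HolderConjugate (2*β/(2*β-1)) := by
      exact (Real.holderConjugate_iff_eq_conjExponent (by linarith)).2 rfl
    have hA : (0:ℝ) ≤ t ^ s * u ^ 2 :=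
      mul_nonneg (rpow_nonneg ht0 s) (sq_nonneg u)
    have key := Real.young_inequality_of_nonneg
      (a := (t ^ s * u ^ 2) ^ (1/2 : ℝ)) (b := t ^ ((s-2)/2))
      (rpow_nonneg hA _) (rpow_nonneg ht0 _) hpq
    have e1 : ((t ^ s * u ^ 2) ^ (1/2 : ℝ)) ^ (2*β) = (t ^ s * u ^ 2) ^ β := by
      rw [← Real.rpow_mul hA]; congr 1; ring
    have e2 : (t ^ ((s-2)/2)) ^ (2*β/(2*β-1)) = t ^ ((s-2)*β/(2*β-1)) := by
      rw [← Real.rpow_mul h0.le]; congr 1; field_simp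
    have e3 : (t ^ s * u ^ 2) ^ (1/2:ℝ) * t ^ ((s-2)/2) = t ^ (s-1) * u := by
      rw [Real.mul_rpow (Real.rpow_nonneg h0.le s) (sq_nonneg u),
        ← Real.rpow_natCast u 2, ← Real.rpow_mul h0.le, ← Real.rpow_mul hu,
        mul_right_comm, ← Real.rpow_add h0]
      have h : s * (1/2) + (s-2)/2 = s - 1 := by ring
      rw [h]
      norm_num
    rw [e1, e2, e3] at key
    have d1 : (t ^ s * u ^ 2) ^ β / (2*β) ≤ (t ^ s * u ^ 2) ^ β :=
      div_le_self (rpow_nonneg hA β) (by linarith)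
    have d2 : t ^ ((s-2)*β/(2*β-1)) / (2*β/(2*β-1)) ≤ t ^ ((s-2)*β/(2*β-1)) := by
      refine div_le_self (rpow_nonneg ht0 _) ?_
      rw [le_div_iff₀ h2β]
      linarith
    linarith

/-- divergence estimate for `D₂(x) = |x₁|^s I` on the unit ball. -/
theorem stmt1 (n : ℕ) (hn : 1 ≤ n) (s : ℝ) (hs : 1 < s)
    (β : ℝ) (hβ1 : max (1/2) (1/s) < β) (hβ2 : β < 1) :
    ∃ C : ℝ, 0 ≤ C ∧
      ∀ Φ : EuclideanSpace ℝ (Fin n) → EuclideanSpace ℝ (Fin n),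
        ContinuousOn Φ (closure (Metric.ball (0 : EuclideanSpace ℝ (Fin n)) 1)) →
        ∫ x in Metric.ball (0 : EuclideanSpace ℝ (Fin n)) 1,
            |s * |x ⟨0, hn⟩| ^ (s - 2) * x ⟨0, hn⟩ * Φ x ⟨0, hn⟩|
          ≤ C * ((∫ x in Metric.ball (0 : EuclideanSpace ℝ (Fin n)) 1,
              (|x ⟨0, hn⟩| ^ s * ‖Φ x‖ ^ 2) ^ β) + 1) := by
  have hs0 : 0 < s := lt_trans one_pos hs
  have hβh : 1/2 < β := lt_of_le_of_lt (le_max_left _ _) hβ1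
  have hβs : 1/s < β := lt_of_le_of_lt (le_max_right _ _) hβ1
  have hβ0 : 0 < β := lt_trans (by norm_num) hβh
  have h2β : 0 < 2*β - 1 := by linarith
  have hsβ : 1 < s * β := by
    rw [div_lt_iff₀ hs0] at hβs
    linarith [hβs]
  set γ : ℝ := (s-2)*β/(2*β-1) with hγdef
  have hγ : -1 < γ := by
    rw [hγdef, lt_div_iff₀ h2β]
    nlinarith
  have hG2 := euclInt hn hγ
  set K : ℝ := ∫ x in Metric.ball (0 : EuclideanSpace ℝ (Fin n)) 1, |x ⟨0, hn⟩| ^ γ with hKdef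
  have hK : 0 ≤ K := integral_nonneg fun x => rpow_nonneg (abs_nonneg _) _
  refine ⟨s * (1 + K), mul_nonneg hs0.le (by linarith), ?_⟩
  intro Φ hΦ
  set B : Set (EuclideanSpace ℝ (Fin n)) := Metric.ball 0 1 with hBdef
  -- boundedness of Φ
  have hcomp : IsCompact (closure B) :=
    (isCompact_closedBall (0 : EuclideanSpace ℝ (Fin n)) 1).of_isClosed_subset
      isClosed_closure Metric.closure_ball_subset_closedBall
  obtain ⟨M, hM⟩ := hcomp.exists_bound_of_continuousOn hΦ
  -- measurability
  have hΦm : AEStronglyMeasurable Φ (volume.restrict B) :=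
    (hΦ.mono subset_closure).aestronglyMeasurable Metric.isOpen_ball.measurableSet
  have hcont1 : Continuous fun x : EuclideanSpace ℝ (Fin n) => |x ⟨0, hn⟩| ^ s :=
    Continuous.rpow_const
      ((EuclideanSpace.proj (⟨0, hn⟩ : Fin n) :
        EuclideanSpace ℝ (Fin n) →L[ℝ] ℝ).continuous.abs) (fun x => Or.inr hs0.le)
  have hΦn2 : AEStronglyMeasurable (fun x => ‖Φ x‖ ^ 2) (volume.restrict B) :=
    (hΦm.norm.mul hΦm.norm).congr
      (Filter.Eventually.of_forall fun x => (pow_two ‖Φ x‖).symm)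
  have hbase : AEStronglyMeasurable
      (fun x => |x ⟨0, hn⟩| ^ s * ‖Φ x‖ ^ 2) (volume.restrict B) :=
    hcont1.aestronglyMeasurable.mul hΦn2
  have hG1m : AEStronglyMeasurable
      (fun x => (|x ⟨0, hn⟩| ^ s * ‖Φ x‖ ^ 2) ^ β) (volume.restrict B) :=
    (Real.continuous_rpow_const hβ0.le).comp_aestronglyMeasurable hbase
  have hMnn : 0 ≤ M :=
    le_trans (norm_nonneg (Φ 0)) (hM 0 (subset_closure (Metric.mem_ball_self one_pos)))
  have hbnd : ∀ x ∈ B, (|x ⟨0, hn⟩| ^ s * ‖Φ x‖ ^ 2) ≤ M ^ 2 := by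
    intro x hx
    have hx1 : |x ⟨0, hn⟩| ≤ 1 := by
      rw [hBdef, Metric.mem_ball, dist_zero_right] at hx
      exact (coordBound x _).trans hx.le
    have hb1 : |x ⟨0, hn⟩| ^ s ≤ 1 := Real.rpow_le_one (abs_nonneg _) hx1 hs0.le
    have hb2 : ‖Φ x‖ ^ 2 ≤ M ^ 2 :=
      pow_le_pow_left₀ (norm_nonneg _) (hM x (subset_closure hx)) 2
    nlinarith [sq_nonneg ‖Φ x‖, Real.rpow_nonneg (abs_nonneg (x ⟨0, hn⟩)) s]
  have hG1 : IntegrableOn (fun x => (|x ⟨0, hn⟩| ^ s * ‖Φ x‖ ^ 2) ^ β) B := by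
    refine Integrable.mono' (g := fun _ => (M ^ 2) ^ β)
      (integrableOn_const measure_ball_lt_top.ne) hG1m ?_
    refine (ae_restrict_iff' Metric.isOpen_ball.measurableSet).mpr
      (Filter.Eventually.of_forall fun x hx => ?_)
    have h0 : (0:ℝ) ≤ |x ⟨0, hn⟩| ^ s * ‖Φ x‖ ^ 2 :=
      mul_nonneg (Real.rpow_nonneg (abs_nonneg _) _) (sq_nonneg _)
    rw [Real.norm_eq_abs, abs_of_nonneg (Real.rpow_nonneg h0 _)]
    exact Real.rpow_le_rpow h0 (hbnd x hx) hβ0.le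
  have hg : IntegrableOn
      (fun x => s * ((|x ⟨0, hn⟩| ^ s * ‖Φ x‖ ^ 2) ^ β + |x ⟨0, hn⟩| ^ γ)) B :=
    (hG1.add hG2).const_mul s
  have hmono : ∫ x in B, |s * |x ⟨0, hn⟩| ^ (s - 2) * x ⟨0, hn⟩ * Φ x ⟨0, hn⟩|
      ≤ ∫ x in B, s * ((|x ⟨0, hn⟩| ^ s * ‖Φ x‖ ^ 2) ^ β + |x ⟨0, hn⟩| ^ γ) := by
    refine integral_mono_of_nonneg (Filter.Eventually.of_forall fun x => abs_nonneg _) hg ?_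
    refine (ae_restrict_iff' Metric.isOpen_ball.measurableSet).mpr
      (Filter.Eventually.of_forall fun x hx => ?_)
    set t : ℝ := |x ⟨0, hn⟩| with htdef
    have ht0 : 0 ≤ t := abs_nonneg _
    have step1 : |s * |x ⟨0, hn⟩| ^ (s-2) * x ⟨0, hn⟩ * Φ x ⟨0, hn⟩|
        = s * (t ^ (s-2) * t) * |Φ x ⟨0, hn⟩| := by
      rw [abs_mul, abs_mul, abs_mul, abs_of_pos hs0,
        abs_of_nonneg (Real.rpow_nonneg (abs_nonneg _) _)]
      ring
    have step2 : t ^ (s-2) * t = t ^ (s-1) := by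
      rcases eq_or_lt_of_le ht0 with h0 | h0
      · rw [← h0, mul_zero, zero_rpow (by intro h; linarith : s - 1 ≠ 0)]
      · calc t ^ (s-2) * t = t ^ (s-2) * t ^ (1:ℝ) := by rw [Real.rpow_one]
          _ = t ^ (s-2+1) := (Real.rpow_add h0 _ _).symm
          _ = t ^ (s-1) := by congr 1; ring
    have hu0 : |Φ x ⟨0, hn⟩| ≤ ‖Φ x‖ := coordBound (Φ x) _
    have hp := ptwise hs hβh hβ2 ht0 (norm_nonneg (Φ x))
    have hle : t ^ (s-1) * |Φ x ⟨0, hn⟩| ≤ t ^ (s-1) * ‖Φ x‖ :=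
      mul_le_mul_of_nonneg_left hu0 (Real.rpow_nonneg ht0 _)
    dsimp only
    rw [step1, step2]
    calc s * t ^ (s-1) * |Φ x ⟨0, hn⟩| = s * (t ^ (s-1) * |Φ x ⟨0, hn⟩|) := by ring
      _ ≤ s * ((t ^ s * ‖Φ x‖ ^ 2) ^ β + t ^ γ) :=
        mul_le_mul_of_nonneg_left (hle.trans hp) hs0.le
  refine hmono.trans ?_
  rw [integral_const_mul, integral_add hG1 hG2]
  have hA : 0 ≤ ∫ x in B, (|x ⟨0, hn⟩| ^ s * ‖Φ x‖ ^ 2) ^ β :=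
    integral_nonneg fun x => Real.rpow_nonneg
      (mul_nonneg (Real.rpow_nonneg (abs_nonneg _) _) (sq_nonneg _)) _
  rw [← hKdef]
  nlinarith [mul_nonneg (mul_nonneg hs0.le hK) hA, hA, hK, hs0.le]
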